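/- There exists a graph G with domatic number 3 and a minimum dominating set D of G such that D is not one of the parts in any partition of the vertex set of G into three dominating sets. Concretely, the graph G on vertices u₁,...,u₇ forming a path u₁u₂u₃u₄u₅u₆u₇ together with edges making {u₃,u₅} dominating (as in the paper's example), has γ(G) = 2, δ(G) = 3, D = {u₃, u₅} is a minimum dominating set, yet D is in no partition of V into three dominating sets (since both neighbors of u₄ lie in D). -/

import Mathlib

/-- `D` is a dominating set of `G`. -/
def IsDomSet {V : Type*} (G : SimpleGraph V) (D : Set V) : Prop :=
  ∀ v : V, v ∈ D ∨ ∃ u ∈ D, G.Adj u v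

/-- The domatic number: the largest `k` such that the vertex set can be
partitioned into `k` dominating sets. -/
noncomputable def domaticNumber {V : Type*} [Fintype V] (G : SimpleGraph V) : ℕ :=
  sSup {k | ∃ f : V → Fin k, ∀ i : Fin k, IsDomSet G (f ⁻¹' {i})}

/-- The domination number: the minimum size of a dominating set. -/
noncomputable def dominationNumber {V : Type*} [Fintype V] (G : SimpleGraph V) : ℕ :=
  sInf {k | ∃ D : Finset V, IsDomSet G ↑D ∧ D.card = k}

def myL : List (Fin 7 × Fin 7) := [(0,1),(1,2),(2,3),(3,4),(4,5),(5,6),(0,2),(4,6)]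

def myRel (a b : Fin 7) : Bool := (a,b) ∈ myL || (b,a) ∈ myL

def myG : SimpleGraph (Fin 7) where
  Adj a b := myRel a b
  symm := by constructor; decide
  loopless := by constructor; decide

instance : DecidableRel myG.Adj := fun a b => inferInstanceAs (Decidable (myRel a b = true))

instance {V : Type*} [Fintype V] (G : SimpleGraph V) [DecidableRel G.Adj] (D : Set V)
    [DecidablePred (· ∈ D)] : Decidable (IsDomSet G D) :=
  inferInstanceAs (Decidable (∀ v, v ∈ D ∨ ∃ u, u ∈ D ∧ G.Adj u v))

instance {α β : Type*} [DecidableEq β] (f : α → β) (i : β) : DecidablePred (· ∈ f ⁻¹' {i}) :=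
  fun v => inferInstanceAs (Decidable (f v = i))

lemma adj0 (u : Fin 7) (h : myG.Adj u 0) : u = 1 ∨ u = 2 := by revert h; fin_cases u <;> decide

lemma adj3 (u : Fin 7) (h : myG.Adj u 3) : u = 2 ∨ u = 4 := by revert h; fin_cases u <;> decide

lemma domNum : dominationNumber myG = 2 := by
  have h2 : 2 ∈ {k | ∃ D : Finset (Fin 7), IsDomSet myG ↑D ∧ D.card = k} :=
    ⟨{2,4}, by decide, by decide⟩
  refine le_antisymm (Nat.sInf_le h2) (le_csInf ⟨2, h2⟩ ?_)
  rintro k ⟨D, hD, rfl⟩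
  by_contra h
  push_neg at h
  interval_cases hc : D.card
  · rw [Finset.card_eq_zero] at hc
    subst hc
    exact (by decide : ¬ IsDomSet myG (↑(∅ : Finset (Fin 7)))) hD
  · rw [Finset.card_eq_one] at hc
    obtain ⟨a, rfl⟩ := hc
    exact (by decide : ∀ a : Fin 7, ¬ IsDomSet myG (↑({a} : Finset (Fin 7)))) a hD

lemma domaticBound : ∀ k ∈ {k | ∃ f : Fin 7 → Fin k, ∀ i : Fin k, IsDomSet myG (f ⁻¹' {i})},
    k ≤ 3 := by
  rintro k ⟨f, hf⟩
  have key : ∀ i : Fin k, i ∈ ({f 0, f 1, f 2} : Finset (Fin k)) := by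
    intro i
    rcases hf i 0 with h | ⟨u, hu, hadj⟩
    · simp_all [Set.mem_preimage]
    · rcases adj0 u hadj with rfl | rfl <;> simp_all [Set.mem_preimage]
  have : (Finset.univ : Finset (Fin k)) ⊆ {f 0, f 1, f 2} := fun i _ => key i
  have hcard := Finset.card_le_card this
  simp only [Finset.card_univ, Fintype.card_fin] at hcard
  calc k ≤ ({f 0, f 1, f 2} : Finset (Fin k)).card := hcard
    _ ≤ 3 := by
      apply le_trans (Finset.card_insert_le _ _)
      have := Finset.card_insert_le (f 1) ({f 2} : Finset (Fin k))
      simp at this ⊢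
      omega

lemma domatNum : domaticNumber myG = 3 := by
  have h3 : 3 ∈ {k | ∃ f : Fin 7 → Fin k, ∀ i : Fin k, IsDomSet myG (f ⁻¹' {i})} :=
    ⟨![0,1,2,0,1,2,0], by decide⟩
  exact le_antisymm (csSup_le ⟨3, h3⟩ domaticBound) (le_csSup ⟨3, domaticBound⟩ h3)

theorem exists_min_dominating_set_in_no_three_partition :
    ∃ (G : SimpleGraph (Fin 7)) (D : Set (Fin 7)),
      dominationNumber G = 2 ∧
      domaticNumber G = 3 ∧
      IsDomSet G D ∧
      D.ncard = dominationNumber G ∧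
      ¬ ∃ f : Fin 7 → Fin 3,
          (∀ i : Fin 3, IsDomSet G (f ⁻¹' {i})) ∧ (∃ i : Fin 3, f ⁻¹' {i} = D) := by
  refine ⟨myG, ↑({2,4} : Finset (Fin 7)), domNum, domatNum, by decide, ?_, ?_⟩
  · rw [domNum, Set.ncard_coe_finset]; decide
  · rintro ⟨f, hdom, i, hpre⟩
    have key : ∀ v : Fin 7, f v = i ↔ v = 2 ∨ v = 4 := by
      intro v
      have := Set.ext_iff.mp hpre v
      simpa using this
    have h3i : f 3 ≠ i := fun h => by
      rcases (key 3).mp h with h' | h' <;> exact absurd h' (by decide)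
    have hforced : ∀ j : Fin 3, j ≠ i → f 3 = j := by
      intro j hj
      rcases hdom j 3 with h | ⟨u, hu, hadj⟩
      · simpa using h
      · exfalso
        have hu' : f u = j := hu
        rcases adj3 u hadj with rfl | rfl
        · exact hj ((key 2).mpr (Or.inl rfl) ▸ hu'.symm ▸ rfl)
        · exact hj ((key 4).mpr (Or.inr rfl) ▸ hu'.symm ▸ rfl)
    have aux : ∀ i : Fin 3, ∃ j₁ j₂ : Fin 3, j₁ ≠ i ∧ j₂ ≠ i ∧ j₁ ≠ j₂ := by decide
    obtain ⟨j₁, j₂, h1, h2, h12⟩ := aux i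
    exact h12 ((hforced j₁ h1).symm.trans (hforced j₂ h2))
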